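/- Let N, Q ≥ 1, let 𝓛_t : ℝ^N × ℝ^Q → ℝ for t ∈ ℕ be time-dependent losses, let η_t ≥ 0 be learning rates, and let θ_init ∈ ℝ^N. Fix ε ∈ ℝ^Q and define the two trajectories θ(ε, t) and θ(0, t) by θ(ε, 0) = θ(0, 0) = θ_init, θ(ε, t+1) = θ(ε, t) − η_t ∇_θ 𝓛_t(θ(ε, t), ε) and θ(0, t+1) = θ(0, t) − η_t ∇_θ 𝓛_t(θ(0, t), 0). Let T ∈ ℕ and let R ⊆ ℝ^N be a set containing θ(ε, t) and θ(0, t) for all t ≤ T. Assume there are constants C, A ≥ 0 such that (i) ‖∇_θ 𝓛_t(θ, ε) − ∇_θ 𝓛_t(θ, 0)‖ ≤ C‖ε‖ for all t < T and all θ ∈ R, and (ii) for each t < T the map θ ↦ ∇_θ 𝓛_t(θ, 0) is A-Lipschitz on R. Then ‖θ(ε, T) − θ(0, T)‖ ≤ C‖ε‖ (Σ_{s<T} η_s) (1 + exp(2A Σ_{s<T} η_s)). -/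
import Mathlib


/-- Parameter-divergence bound (discrete Gronwall consequence): comparing SGD
trajectories on the perturbed loss `𝓛_t(·, ε)` and the unperturbed loss
`𝓛_t(·, 0)` from the same initialization, if the gradient perturbation is
bounded by `C‖ε‖` on a region `R` containing both trajectories up to time `T`
and the unperturbed gradients are `A`-Lipschitz on `R`, then
`‖θ(ε,T) − θ(0,T)‖ ≤ C‖ε‖ (∑_{s<T} η_s) (1 + exp(2A ∑_{s<T} η_s))`. -/
theorem stmt_12 (N Q : ℕ) (hN : 1 ≤ N) (hQ : 1 ≤ Q)
    (𝓛 : ℕ → EuclideanSpace ℝ (Fin N) × EuclideanSpace ℝ (Fin Q) → ℝ)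
    (G : ℕ → EuclideanSpace ℝ (Fin N) → EuclideanSpace ℝ (Fin Q) → EuclideanSpace ℝ (Fin N))
    (hGgrad : ∀ t θ ε', G t θ ε' = gradient (fun θ' => 𝓛 t (θ', ε')) θ)
    (η : ℕ → ℝ) (hη : ∀ t, 0 ≤ η t)
    (θinit : EuclideanSpace ℝ (Fin N))
    (ε : EuclideanSpace ℝ (Fin Q))
    (θe θz : ℕ → EuclideanSpace ℝ (Fin N))
    (hθe0 : θe 0 = θinit) (hθz0 : θz 0 = θinit)
    (hθe : ∀ t, θe (t + 1) = θe t - η t • G t (θe t) ε)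
    (hθz : ∀ t, θz (t + 1) = θz t - η t • G t (θz t) 0)
    (T : ℕ) (R : Set (EuclideanSpace ℝ (Fin N)))
    (hR : ∀ t ≤ T, θe t ∈ R ∧ θz t ∈ R)
    (C A : ℝ) (hC : 0 ≤ C) (hA : 0 ≤ A)
    (hpert : ∀ t < T, ∀ θ ∈ R, ‖G t θ ε - G t θ 0‖ ≤ C * ‖ε‖)
    (hlip : ∀ t < T, ∀ θ ∈ R, ∀ θ' ∈ R, ‖G t θ 0 - G t θ' 0‖ ≤ A * ‖θ - θ'‖) :
    ‖θe T - θz T‖ ≤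
      C * ‖ε‖ * (∑ s ∈ Finset.range T, η s) *
        (1 + Real.exp (2 * A * ∑ s ∈ Finset.range T, η s)) := by

  set K := C * ‖ε‖ with hKdef
  have hK0 : 0 ≤ K := mul_nonneg hC (norm_nonneg _)
  set S : ℕ → ℝ := fun t => ∑ s ∈ Finset.range t, η s with hSdef
  have hS0 : ∀ t, 0 ≤ S t := fun t => Finset.sum_nonneg (fun s _ => hη s)
  have main : ∀ t, t ≤ T → ‖θe t - θz t‖ ≤ K * S t * Real.exp (A * S t) := by
    intro t
    induction t with
    | zero =>
      intro _
      simp [hθe0, hθz0, hSdef]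
    | succ t ih =>
      intro ht
      have ht' : t ≤ T := Nat.le_of_succ_le ht
      have htT : t < T := ht
      have ihd := ih ht'
      have hRe := (hR t ht').1
      have hRz := (hR t ht').2
      have hid : θe (t+1) - θz (t+1) =
          (θe t - θz t) - η t • ((G t (θe t) ε - G t (θe t) 0) + (G t (θe t) 0 - G t (θz t) 0)) := by
        rw [hθe t, hθz t]
        module
      have hpb := hpert t htT (θe t) hRe
      have hlb := hlip t htT (θe t) hRe (θz t) hRz
      have step : ‖θe (t+1) - θz (t+1)‖ ≤ (1 + η t * A) * ‖θe t - θz t‖ + η t * K := by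
        rw [hid]
        have h1 : ‖(θe t - θz t) - η t • ((G t (θe t) ε - G t (θe t) 0) + (G t (θe t) 0 - G t (θz t) 0))‖
            ≤ ‖θe t - θz t‖ + ‖η t • ((G t (θe t) ε - G t (θe t) 0) + (G t (θe t) 0 - G t (θz t) 0))‖ :=
          norm_sub_le _ _
        have h2 : ‖η t • ((G t (θe t) ε - G t (θe t) 0) + (G t (θe t) 0 - G t (θz t) 0))‖
            ≤ η t * (K + A * ‖θe t - θz t‖) := by
          rw [norm_smul, Real.norm_eq_abs, abs_of_nonneg (hη t)]
          refine mul_le_mul_of_nonneg_left ?_ (hη t)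
          calc ‖(G t (θe t) ε - G t (θe t) 0) + (G t (θe t) 0 - G t (θz t) 0)‖
              ≤ ‖G t (θe t) ε - G t (θe t) 0‖ + ‖G t (θe t) 0 - G t (θz t) 0‖ := norm_add_le _ _
            _ ≤ K + A * ‖θe t - θz t‖ := add_le_add hpb hlb
        nlinarith [h1, h2]
      have hSsucc : S (t+1) = S t + η t := by
        simp [hSdef, Finset.sum_range_succ]
      have he2 : 1 + η t * A ≤ Real.exp (A * η t) := by
        have := Real.add_one_le_exp (A * η t)
        linarith [mul_comm (η t) A]
      have he1ge : (1:ℝ) ≤ Real.exp (A * S t) :=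
        Real.one_le_exp (mul_nonneg hA (hS0 t))
      have he2ge : (1:ℝ) ≤ Real.exp (A * η t) :=
        Real.one_le_exp (mul_nonneg hA (hη t))
      have hexp : Real.exp (A * S (t+1)) = Real.exp (A * S t) * Real.exp (A * η t) := by
        rw [hSsucc, show A * (S t + η t) = A * S t + A * η t from mul_add A _ _, Real.exp_add]
      have hd0 : 0 ≤ ‖θe t - θz t‖ := norm_nonneg _
      have he1pos : 0 < Real.exp (A * S t) := Real.exp_pos _
      have he2pos : 0 < Real.exp (A * η t) := Real.exp_pos _
      calc ‖θe (t+1) - θz (t+1)‖ ≤ (1 + η t * A) * ‖θe t - θz t‖ + η t * K := step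
        _ ≤ (1 + η t * A) * (K * S t * Real.exp (A * S t)) + η t * K := by
            have h0 : 0 ≤ 1 + η t * A := by nlinarith [mul_nonneg (hη t) hA]
            nlinarith [mul_le_mul_of_nonneg_left ihd h0]
        _ ≤ K * S (t+1) * Real.exp (A * S (t+1)) := by
            rw [hSsucc, show A * (S t + η t) = A * S t + A * η t from mul_add A _ _, Real.exp_add]
            have t1 : (1 + η t * A) * (K * S t * Real.exp (A * S t))
                ≤ Real.exp (A * η t) * (K * S t * Real.exp (A * S t)) :=
              mul_le_mul_of_nonneg_right he2 (mul_nonneg (mul_nonneg hK0 (hS0 t)) he1pos.le)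
            have t2 : η t * K ≤ η t * K * (Real.exp (A * S t) * Real.exp (A * η t)) :=
              le_mul_of_one_le_right (mul_nonneg (hη t) hK0)
                (one_le_mul_of_one_le_of_one_le he1ge he2ge)
            calc (1 + η t * A) * (K * S t * Real.exp (A * S t)) + η t * K
                ≤ Real.exp (A * η t) * (K * S t * Real.exp (A * S t))
                  + η t * K * (Real.exp (A * S t) * Real.exp (A * η t)) := add_le_add t1 t2
              _ = K * (S t + η t) * (Real.exp (A * S t) * Real.exp (A * η t)) := by ring
  have hT := main T le_rfl
  have h1 : Real.exp (A * S T) ≤ 1 + Real.exp (2 * A * S T) := by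
    have : Real.exp (A * S T) ≤ Real.exp (2 * A * S T) :=
      Real.exp_le_exp.mpr (by nlinarith [mul_nonneg hA (hS0 T)])
    linarith [Real.exp_pos (2 * A * S T)]
  calc ‖θe T - θz T‖ ≤ K * S T * Real.exp (A * S T) := hT
    _ ≤ K * S T * (1 + Real.exp (2 * A * S T)) :=
        mul_le_mul_of_nonneg_left h1 (mul_nonneg hK0 (hS0 T))
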